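/- Let k be a field of characteristic ≠ 2, 3, let b, c, s ∈ k with s^3 + bs + c ≠ 0. Define a = (s^4 − 2bs^2 − 8cs + b^2)/(4(s^3 + bs + c)), t_0 = (−s^4 − 6bs^2 − 4cs − b^2)/(4(s^3 + bs + c)), t_1 = (−s^3 + bs + 2c)/(2(s^3 + bs + c)), t_2 = (−3s^2 − b)/(2(s^3 + bs + c)). Then (t_2 r^2 + t_1 r + t_0)^2 = r^2 + a r + a^2 + b in the algebra k[r] = k[T]/(T^3 + bT + c). -/

import Mathlib

open Polynomial

set_option maxHeartbeats 1000000 in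
private lemma psq_aux1 {k : Type*} [Field k] (h2 : (2:k) ≠ 0) (h4 : (4:k) ≠ 0) (b c s d : k)
    (hdef : d = s ^ 3 + b * s + c) (hd : d ≠ 0) :
    ((-s ^ 3 + b * s + 2 * c) / (2 * d)) ^ 2
      + 2 * ((-s ^ 4 - 6 * b * s ^ 2 - 4 * c * s - b ^ 2) / (4 * d)) * ((-3 * s ^ 2 - b) / (2 * d))
      - b * ((-3 * s ^ 2 - b) / (2 * d)) ^ 2 = 1 := by
  have h2d : (2*d) ≠ 0 := mul_ne_zero h2 hd
  have h4d : (4*d) ≠ 0 := mul_ne_zero h4 hd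
  field_simp [h2d, h4d]
  rw [hdef]; ring

set_option maxHeartbeats 1000000 in
private lemma psq_aux2 {k : Type*} [Field k] (h2 : (2:k) ≠ 0) (h4 : (4:k) ≠ 0) (b c s d : k)
    (hdef : d = s ^ 3 + b * s + c) (hd : d ≠ 0) :
    2 * ((-s ^ 4 - 6 * b * s ^ 2 - 4 * c * s - b ^ 2) / (4 * d)) * ((-s ^ 3 + b * s + 2 * c) / (2 * d))
      - c * ((-3 * s ^ 2 - b) / (2 * d)) ^ 2
      - 2 * b * ((-s ^ 3 + b * s + 2 * c) / (2 * d)) * ((-3 * s ^ 2 - b) / (2 * d))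
      = (s ^ 4 - 2 * b * s ^ 2 - 8 * c * s + b ^ 2) / (4 * d) := by
  have h2d : (2*d) ≠ 0 := mul_ne_zero h2 hd
  have h4d : (4*d) ≠ 0 := mul_ne_zero h4 hd
  field_simp [h2d, h4d]
  rw [hdef]; ring

set_option maxHeartbeats 1000000 in
private lemma psq_aux3 {k : Type*} [Field k] (h2 : (2:k) ≠ 0) (h4 : (4:k) ≠ 0) (b c s d : k)
    (hdef : d = s ^ 3 + b * s + c) (hd : d ≠ 0) :
    ((-s ^ 4 - 6 * b * s ^ 2 - 4 * c * s - b ^ 2) / (4 * d)) ^ 2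
      - 2 * c * ((-s ^ 3 + b * s + 2 * c) / (2 * d)) * ((-3 * s ^ 2 - b) / (2 * d))
      = ((s ^ 4 - 2 * b * s ^ 2 - 8 * c * s + b ^ 2) / (4 * d)) ^ 2 + b := by
  have h2d : (2*d) ≠ 0 := mul_ne_zero h2 hd
  have h4d : (4*d) ≠ 0 := mul_ne_zero h4 hd
  field_simp [h2d, h4d]
  rw [hdef]; ring

/-- Explicit parametrization (by a parameter `s`) of square roots of `r² + ar + a² + b`
in the cubic algebra `A = k[T]/(T³ + bT + c)`: with
`a = (s⁴ − 2bs² − 8cs + b²)/(4(s³+bs+c))`,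
`t₀ = (−s⁴ − 6bs² − 4cs − b²)/(4(s³+bs+c))`,
`t₁ = (−s³ + bs + 2c)/(2(s³+bs+c))`,
`t₂ = (−3s² − b)/(2(s³+bs+c))`,
one has `(t₂r² + t₁r + t₀)² = r² + ar + a² + b` in `A`. -/
theorem parametrized_sqrt_in_cubic_algebra {k : Type*} [Field k]
    (h2 : (2 : k) ≠ 0) (h3 : (3 : k) ≠ 0) (b c s : k)
    (hs : s ^ 3 + b * s + c ≠ 0)
    (a t₀ t₁ t₂ : k)
    (ha : a = (s ^ 4 - 2 * b * s ^ 2 - 8 * c * s + b ^ 2) / (4 * (s ^ 3 + b * s + c)))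
    (ht₀ : t₀ = (-s ^ 4 - 6 * b * s ^ 2 - 4 * c * s - b ^ 2) / (4 * (s ^ 3 + b * s + c)))
    (ht₁ : t₁ = (-s ^ 3 + b * s + 2 * c) / (2 * (s ^ 3 + b * s + c)))
    (ht₂ : t₂ = (-3 * s ^ 2 - b) / (2 * (s ^ 3 + b * s + c))) :
    letI A := AdjoinRoot (X ^ 3 + C b * X + C c : k[X])
    letI r : A := AdjoinRoot.root _
    (algebraMap k A t₂ * r ^ 2 + algebraMap k A t₁ * r + algebraMap k A t₀) ^ 2 =
      r ^ 2 + algebraMap k A a * r + algebraMap k A (a ^ 2 + b) := by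
  have h4 : (4 : k) ≠ 0 := by
    have h : (4 : k) = 2 * 2 := by norm_num
    rw [h]; exact mul_ne_zero h2 h2
  obtain ⟨d, hdef, hd⟩ : ∃ d : k, d = s ^ 3 + b * s + c ∧ d ≠ 0 := ⟨_, rfl, hs⟩
  rw [← hdef] at ha ht₀ ht₁ ht₂
  have k1 : t₁ ^ 2 + 2 * t₀ * t₂ - b * t₂ ^ 2 = 1 := by
    rw [ht₀, ht₁, ht₂]; exact psq_aux1 h2 h4 b c s d hdef hd
  have k2 : 2 * t₀ * t₁ - c * t₂ ^ 2 - 2 * b * t₁ * t₂ = a := by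
    rw [ha, ht₀, ht₁, ht₂]; exact psq_aux2 h2 h4 b c s d hdef hd
  have k3 : t₀ ^ 2 - 2 * c * t₁ * t₂ = a ^ 2 + b := by
    rw [ha, ht₀, ht₁, ht₂]; exact psq_aux3 h2 h4 b c s d hdef hd
  set A := AdjoinRoot (X ^ 3 + C b * X + C c : k[X]) with hA
  set r : A := AdjoinRoot.root _ with hr
  set e : k →+* A := algebraMap k A with he
  have hH : r ^ 3 + e b * r + e c = 0 := by
    have h := AdjoinRoot.mk_self (f := (X ^ 3 + C b * X + C c : k[X]))
    simp only [map_add, map_mul, map_pow, AdjoinRoot.mk_X, AdjoinRoot.mk_C] at h; exact h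
  have h1' : e t₁ ^ 2 + 2 * e t₀ * e t₂ - e b * e t₂ ^ 2 = 1 := by
    have h := congrArg e k1
    simpa [map_add, map_sub, map_mul, map_pow, map_one, map_ofNat] using h
  have h2' : 2 * e t₀ * e t₁ - e c * e t₂ ^ 2 - 2 * e b * e t₁ * e t₂ = e a := by
    have h := congrArg e k2
    simpa [map_add, map_sub, map_mul, map_pow, map_ofNat] using h
  have h3' : e t₀ ^ 2 - 2 * e c * e t₁ * e t₂ = e (a ^ 2 + b) := by
    have h := congrArg e k3
    simpa [map_add, map_sub, map_mul, map_pow, map_ofNat] using h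
  show (e t₂ * r ^ 2 + e t₁ * r + e t₀) ^ 2 = r ^ 2 + e a * r + e (a ^ 2 + b)
  linear_combination (e t₂ ^ 2 * r + 2 * e t₁ * e t₂) * hH + r ^ 2 * h1' + r * h2' + h3'
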